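/- Let D(s) be the discriminant of the interpolated chain P(s) = (1-s)P + sP' for a reversible Markov chain P with absorbing version P' on marked set M, and let Π_M be the orthogonal projector onto the coordinates indexed by M. Then for s ∈ [0,1), the derivative of D(s) with respect to s satisfies dD/ds = (1/(2(1-s))) · {Π_M, I - D(s)}, where {A,B} = AB + BA is the anticommutator. -/

import Mathlib

open Finset Matrix

/-- the derivative of the discriminant `D(s)` of the interpolated
chain satisfies `dD/ds = (1/(2(1-s))) {Π_M, I - D(s)}` for `s ∈ [0,1)`. -/
theorem discriminant_derivative_anticommutator
    {X : Type*} [Fintype X] [DecidableEq X]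
    (P : Matrix X X ℝ) (π : X → ℝ) (M : Finset X)
    (hnn : ∀ x y, 0 ≤ P x y) (hrow : ∀ x, ∑ y, P x y = 1)
    (hπpos : ∀ x, 0 < π x)
    (hrev : ∀ x y, π x * P x y = π y * P y x)
    (D : ℝ → Matrix X X ℝ)
    (hD : ∀ u x y, D u x y = Real.sqrt
      ((if x ∈ M then (1 - u) * P x y + (if x = y then u else 0) else P x y) *
       (if y ∈ M then (1 - u) * P y x + (if y = x then u else 0) else P y x)))
    (PiM : Matrix X X ℝ)
    (hPiM : ∀ x y, PiM x y = if x = y ∧ x ∈ M then (1:ℝ) else 0)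
    (s : ℝ) (hs : s ∈ Set.Ico (0:ℝ) 1) :
    ∀ x y, HasDerivWithinAt (fun u => D u x y)
      ((1 / (2 * (1 - s))) *
        ((PiM * (1 - D s) + (1 - D s) * PiM) x y))
      (Set.Ico (0:ℝ) 1) s := by
  intro x y
  obtain ⟨hs0, hs1⟩ := hs
  have h1s : (0:ℝ) < 1 - s := by linarith
  set c := Real.sqrt (P x y * P y x) with hc
  have hmul1 : (PiM * (1 - D s)) x y = if x ∈ M then (1 - D s) x y else 0 := by
    simp only [Matrix.mul_apply, hPiM]
    rw [Finset.sum_eq_single x]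
    · by_cases hx : x ∈ M <;> simp [hx]
    · intro b _ hb
      simp [(Ne.symm hb : x ≠ b)]
    · simp
  have hmul2 : ((1 - D s) * PiM) x y = if y ∈ M then (1 - D s) x y else 0 := by
    simp only [Matrix.mul_apply, hPiM]
    rw [Finset.sum_eq_single y]
    · by_cases hy : y ∈ M <;> simp [hy]
    · intro b _ hb
      simp [hb]
    · simp
  rw [Matrix.add_apply, hmul1, hmul2]
  by_cases hxy : x = y
  · subst hxy
    by_cases hx : x ∈ M
    · -- diagonal, marked
      have hEq : ∀ u ∈ Set.Ico (0:ℝ) 1, D u x x = (1 - u) * P x x + u := by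
        intro u hu
        rw [hD]
        simp only [hx, if_pos rfl, if_true]
        rw [Real.sqrt_mul_self]
        nlinarith [hnn x x, hu.1, hu.2]
      have hDs : D s x x = (1 - s) * P x x + s := hEq s ⟨hs0, hs1⟩
      have key : HasDerivAt (fun u : ℝ => (1 - u) * P x x + u) ((-1) * P x x + 1) s := by
        have h1 : HasDerivAt (fun u : ℝ => (1 - u)) (-1) s := by
          simpa using (hasDerivAt_id s).const_sub 1
        exact (h1.mul_const (P x x)).add (hasDerivAt_id' s)
      have hder : HasDerivWithinAt (fun u => D u x x) ((-1) * P x x + 1)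
          (Set.Ico (0:ℝ) 1) s :=
        key.hasDerivWithinAt.congr hEq (hEq s ⟨hs0, hs1⟩)
      convert hder using 1
      simp only [hx, if_true, Matrix.sub_apply, Matrix.one_apply_eq, hDs]
      field_simp
      ring
    · -- diagonal, unmarked
      have hEq : ∀ u ∈ Set.Ico (0:ℝ) 1, D u x x = P x x := by
        intro u hu
        rw [hD]
        simp only [hx, if_false]
        exact Real.sqrt_mul_self (hnn x x)
      have hder : HasDerivWithinAt (fun u => D u x x) 0 (Set.Ico (0:ℝ) 1) s :=
        (hasDerivWithinAt_const s _ (P x x)).congr hEq (hEq s ⟨hs0, hs1⟩)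
      convert hder using 1
      simp [hx]
  · by_cases hx : x ∈ M <;> by_cases hy : y ∈ M
    · -- both marked, off-diagonal
      have hEq : ∀ u ∈ Set.Ico (0:ℝ) 1, D u x y = (1 - u) * c := by
        intro u hu
        rw [hD]
        simp only [hx, hy, if_true, if_neg hxy, if_neg (Ne.symm hxy), add_zero]
        rw [show (1 - u) * P x y * ((1 - u) * P y x)
            = ((1 - u) * (1 - u)) * (P x y * P y x) by ring,
          Real.sqrt_mul (mul_self_nonneg _), Real.sqrt_mul_self (by linarith [hu.2])]
      have hDs : D s x y = (1 - s) * c := hEq s ⟨hs0, hs1⟩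
      have key : HasDerivAt (fun u : ℝ => (1 - u) * c) ((-1) * c) s := by
        have h1 : HasDerivAt (fun u : ℝ => (1 - u)) (-1) s := by
          simpa using (hasDerivAt_id s).const_sub 1
        exact h1.mul_const c
      have hder : HasDerivWithinAt (fun u => D u x y) ((-1) * c)
          (Set.Ico (0:ℝ) 1) s :=
        key.hasDerivWithinAt.congr hEq (hEq s ⟨hs0, hs1⟩)
      convert hder using 1
      simp only [hx, hy, if_true, Matrix.sub_apply, Matrix.one_apply_ne hxy, hDs]
      field_simp
      ring
    · -- x marked, y unmarked
      have hEq : ∀ u ∈ Set.Ico (0:ℝ) 1, D u x y = Real.sqrt (1 - u) * c := by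
        intro u hu
        rw [hD]
        simp only [hx, hy, if_true, if_false, if_neg hxy, add_zero]
        rw [show (1 - u) * P x y * P y x = (1 - u) * (P x y * P y x) by ring,
          Real.sqrt_mul (by linarith [hu.2])]
      have hDs : D s x y = Real.sqrt (1 - s) * c := hEq s ⟨hs0, hs1⟩
      have key : HasDerivAt (fun u : ℝ => Real.sqrt (1 - u) * c)
          ((1 / (2 * Real.sqrt (1 - s)) * (-1)) * c) s := by
        have h1 : HasDerivAt (fun u : ℝ => (1 - u)) (-1) s := by
          simpa using (hasDerivAt_id s).const_sub 1
        have h2 : HasDerivAt (fun u : ℝ => Real.sqrt (1 - u))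
            (1 / (2 * Real.sqrt (1 - s)) * (-1)) s :=
          (Real.hasDerivAt_sqrt (ne_of_gt h1s)).comp s h1
        exact h2.mul_const c
      have hder : HasDerivWithinAt (fun u => D u x y)
          ((1 / (2 * Real.sqrt (1 - s)) * (-1)) * c) (Set.Ico (0:ℝ) 1) s :=
        key.hasDerivWithinAt.congr hEq (hEq s ⟨hs0, hs1⟩)
      convert hder using 1
      simp only [hx, hy, if_true, if_false, Matrix.sub_apply,
        Matrix.one_apply_ne hxy, hDs, add_zero]
      have hsq : Real.sqrt (1 - s) * Real.sqrt (1 - s) = 1 - s :=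
        Real.mul_self_sqrt h1s.le
      have hpos : 0 < Real.sqrt (1 - s) := Real.sqrt_pos.mpr h1s
      field_simp
      linear_combination (-c) * hsq
    · -- x unmarked, y marked
      have hEq : ∀ u ∈ Set.Ico (0:ℝ) 1, D u x y = Real.sqrt (1 - u) * c := by
        intro u hu
        rw [hD]
        simp only [hx, hy, if_true, if_false, if_neg (Ne.symm hxy), add_zero]
        rw [show P x y * ((1 - u) * P y x) = (1 - u) * (P x y * P y x) by ring,
          Real.sqrt_mul (by linarith [hu.2])]
      have hDs : D s x y = Real.sqrt (1 - s) * c := hEq s ⟨hs0, hs1⟩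
      have key : HasDerivAt (fun u : ℝ => Real.sqrt (1 - u) * c)
          ((1 / (2 * Real.sqrt (1 - s)) * (-1)) * c) s := by
        have h1 : HasDerivAt (fun u : ℝ => (1 - u)) (-1) s := by
          simpa using (hasDerivAt_id s).const_sub 1
        have h2 : HasDerivAt (fun u : ℝ => Real.sqrt (1 - u))
            (1 / (2 * Real.sqrt (1 - s)) * (-1)) s :=
          (Real.hasDerivAt_sqrt (ne_of_gt h1s)).comp s h1
        exact h2.mul_const c
      have hder : HasDerivWithinAt (fun u => D u x y)
          ((1 / (2 * Real.sqrt (1 - s)) * (-1)) * c) (Set.Ico (0:ℝ) 1) s :=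
        key.hasDerivWithinAt.congr hEq (hEq s ⟨hs0, hs1⟩)
      convert hder using 1
      simp only [hx, hy, if_true, if_false, Matrix.sub_apply,
        Matrix.one_apply_ne hxy, hDs, zero_add]
      have hsq : Real.sqrt (1 - s) * Real.sqrt (1 - s) = 1 - s :=
        Real.mul_self_sqrt h1s.le
      have hpos : 0 < Real.sqrt (1 - s) := Real.sqrt_pos.mpr h1s
      field_simp
      linear_combination (-c) * hsq
    · -- neither marked
      have hEq : ∀ u ∈ Set.Ico (0:ℝ) 1, D u x y = c := by
        intro u hu
        rw [hD]
        simp [hx, hy, hc]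
      have hder : HasDerivWithinAt (fun u => D u x y) 0 (Set.Ico (0:ℝ) 1) s :=
        (hasDerivWithinAt_const s _ c).congr hEq (hEq s ⟨hs0, hs1⟩)
      convert hder using 1
      simp [hx, hy]
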